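/- Let G be a simple graph on [n] = {1,…,n} with connected components G₁, G₂, …, G_k (each G_i regarded as a connected graph on its own vertex set). Then the h-polynomials of the associated graphical building sets satisfy h_G(t) = (1 + t + ⋯ + t^{k−1}) · ∏_{i=1}^k h_{G_i}(t), as an identity of polynomials in ℤ[t]. -/

import Mathlib

open scoped Classical

noncomputable section

/-- A rooted tree on the vertex set `S ⊆ ℕ`, encoded by its root and its parent
function; edges are directed away from the root (so each non-root vertex `i`
carries the edge `(i, parent i)`, with `parent i` closer to the root).  The
parent function is normalized to be the identity outside `S` and at the root. -/
structure RTree (S : Finset ℕ) where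
  root : ℕ
  root_mem : root ∈ S
  parent : ℕ → ℕ
  parent_out : ∀ i, i ∉ S → parent i = i
  parent_root : parent root = root
  parent_mem : ∀ i ∈ S, parent i ∈ S
  reach : ∀ i ∈ S, ∃ k, parent^[k] i = root

namespace RTree

variable {S : Finset ℕ}

/-- The set `T_{≤ i}` of descendants of `i` in `T` (including `i` itself). -/
def desc (T : RTree S) (i : ℕ) : Finset ℕ :=
  S.filter fun j => ∃ k, T.parent^[k] j = i

/-- The depth of a vertex: its distance to the root. -/
def dp (T : RTree S) (x : ℕ) : ℕ :=
  sInf {k | T.parent^[k] x = T.root}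

/-- The depth of the tree: the maximal depth of a vertex. -/
def depth (T : RTree S) : ℕ := S.sup T.dp

/-- The set of descent edges `(i, parent i)` with `i > parent i`, recorded by
the child endpoint `i`. -/
def desSet (T : RTree S) : Finset ℕ :=
  S.filter fun i => i ≠ T.root ∧ T.parent i < i

/-- The number of descents of `T`. -/
def des (T : RTree S) : ℕ := T.desSet.card

/-- The major index of `T`: the sum, over all descent edges `(i,j)` of `T`
(with `j = parent i`), of `depth T - dp j`, i.e. of the minimal rank of `j`. -/
def maj (T : RTree S) : ℕ :=
  ∑ i ∈ T.desSet, (T.depth - T.dp (T.parent i))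

/-- The statistic `μ(T)`: the sum, over all edges `(i,j)` of `T`
(with `j = parent i`), of `depth T - dp j`. -/
def mu (T : RTree S) : ℕ :=
  ∑ i ∈ S.filter (fun i => i ≠ T.root), (T.depth - T.dp (T.parent i))

end RTree

/-- `B` is a building set on the finite ground set `S`. -/
def IsBuildingSet (S : Finset ℕ) (B : Finset (Finset ℕ)) : Prop :=
  (∀ I ∈ B, I ⊆ S ∧ I.Nonempty) ∧
  (∀ I ∈ B, ∀ J ∈ B, (I ∩ J).Nonempty → I ∪ J ∈ B) ∧
  (∀ i ∈ S, ({i} : Finset ℕ) ∈ B)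

/-- `B` is a connected building set on `S`. -/
def IsConnBuildingSet (S : Finset ℕ) (B : Finset (Finset ℕ)) : Prop :=
  IsBuildingSet S B ∧ S ∈ B

/-- `T` is a `B`-tree: all descendant sets belong to `B`, and no union of
descendant sets of `k ≥ 2` pairwise incomparable nodes belongs to `B`. -/
def IsBTree (S : Finset ℕ) (B : Finset (Finset ℕ)) (T : RTree S) : Prop :=
  (∀ i ∈ S, T.desc i ∈ B) ∧
  ∀ I : Finset ℕ, I ⊆ S → 2 ≤ I.card →
    (∀ i ∈ I, ∀ j ∈ I, i ≠ j → i ∉ T.desc j ∧ j ∉ T.desc i) →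
    I.biUnion T.desc ∉ B

/-- The connected graphical building set `B̂(G)` of a simple graph `G` on the
finite vertex set `V`: all nonempty subsets inducing a connected subgraph,
together with `V` itself. -/
def hatB (G : SimpleGraph ℕ) (V : Finset ℕ) : Finset (Finset ℕ) :=
  (V.powerset.filter fun J =>
    J.Nonempty ∧ (G.induce (J : Set ℕ)).Connected) ∪ {V}

namespace RTree

variable {S : Finset ℕ}

@[ext] lemma ext' {T T' : RTree S} (h1 : T.root = T'.root)
    (h2 : T.parent = T'.parent) : T = T' := by
  cases T; cases T'; simp_all

instance : Finite (RTree S) := by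
  apply Finite.of_injective (β := {x // x ∈ S} × ({x // x ∈ S} → {x // x ∈ S}))
    (fun T => (⟨T.root, T.root_mem⟩, fun v => ⟨T.parent v, T.parent_mem v v.2⟩))
  intro T T' h
  simp only [Prod.mk.injEq, Subtype.mk.injEq] at h
  refine ext' h.1 (funext fun v => ?_)
  by_cases hv : v ∈ S
  · exact congrArg Subtype.val (congrFun h.2 ⟨v, hv⟩)
  · rw [T.parent_out v hv, T'.parent_out v hv]

lemma desc_subset (T : RTree S) (i : ℕ) : T.desc i ⊆ S := Finset.filter_subset _ _

lemma mem_desc {T : RTree S} {j i : ℕ} :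
    j ∈ T.desc i ↔ j ∈ S ∧ ∃ k, T.parent^[k] j = i := by
  simp [desc]

lemma mem_desc_self {T : RTree S} {i : ℕ} (h : i ∈ S) : i ∈ T.desc i :=
  mem_desc.2 ⟨h, 0, rfl⟩

lemma parent_iterate_root (T : RTree S) (m : ℕ) : T.parent^[m] T.root = T.root :=
  Function.iterate_fixed T.parent_root m

lemma desc_root (T : RTree S) : T.desc T.root = S := by
  apply Finset.Subset.antisymm (desc_subset T _)
  intro v hv
  exact mem_desc.2 ⟨hv, T.reach v hv⟩

lemma root_mem_desc {T : RTree S} {v : ℕ} (h : T.root ∈ T.desc v) : v = T.root := by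
  obtain ⟨-, m, hm⟩ := mem_desc.1 h
  rw [parent_iterate_root] at hm; exact hm.symm

lemma mem_desc_trans {T : RTree S} {x y z : ℕ} (h1 : x ∈ T.desc y) (h2 : y ∈ T.desc z) :
    x ∈ T.desc z := by
  obtain ⟨hx, a, ha⟩ := mem_desc.1 h1
  obtain ⟨-, b, hb⟩ := mem_desc.1 h2
  exact mem_desc.2 ⟨hx, b + a, by rw [Function.iterate_add_apply, ha, hb]⟩

lemma desc_antisymm {T : RTree S} {x y : ℕ} (h1 : x ∈ T.desc y) (h2 : y ∈ T.desc x) :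
    x = y := by
  obtain ⟨hx, a, ha⟩ := mem_desc.1 h1
  obtain ⟨hy, b, hb⟩ := mem_desc.1 h2
  rcases Nat.eq_zero_or_pos (b + a) with h | h
  · obtain ⟨rfl, rfl⟩ : a = 0 ∧ b = 0 := by omega
    simp at ha hb; omega
  -- x is periodic with period a+b
  have hper : T.parent^[b + a] x = x := by
    rw [Function.iterate_add_apply, ha, hb]
  obtain ⟨m, hm⟩ := T.reach x hx
  -- parent^[m + j] x = root for all j
  have habs : ∀ j, T.parent^[m + j] x = T.root := by
    intro j
    rw [Nat.add_comm, Function.iterate_add_apply, hm]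
    exact parent_iterate_root T j
  have hper' : ∀ j, T.parent^[j * (b + a)] x = x := by
    intro j
    induction j with
    | zero => simp
    | succ p ih => rw [Nat.succ_mul, Function.iterate_add_apply, hper, ih]
  have hxroot : x = T.root := by
    have h1' := hper' (m + 1)
    have hle : m + 1 ≤ (m + 1) * (b + a) := Nat.le_mul_of_pos_right _ h
    have : (m + 1) * (b + a) = m + ((m+1)*(b+a) - m) := by omega
    rw [this, habs] at h1'
    exact h1'.symm
  subst hxroot
  exact (root_mem_desc h1).symm

lemma mem_desc_parent {T : RTree S} {v : ℕ} (h : v ∈ S) : v ∈ T.desc (T.parent v) :=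
  mem_desc.2 ⟨h, 1, rfl⟩

lemma parent_mem_desc {T : RTree S} {v x : ℕ} (hx : x ∈ T.desc v) (hxv : x ≠ v) :
    T.parent x ∈ T.desc v := by
  obtain ⟨hxS, a, ha⟩ := mem_desc.1 hx
  match a, ha with
  | 0, ha => exact absurd ha hxv
  | a+1, ha =>
    exact mem_desc.2 ⟨T.parent_mem x hxS, a, by
      rwa [Function.iterate_succ_apply] at ha⟩

end RTree
section Comp

variable {n : ℕ} {G : SimpleGraph ℕ} {k : ℕ} {V : Fin k → Finset ℕ}

lemma adj_comp (hGS : ∀ x y, G.Adj x y → x ∈ Finset.Icc 1 n ∧ y ∈ Finset.Icc 1 n)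
    (hcover : Finset.univ.biUnion V = Finset.Icc 1 n)
    (hsep : ∀ i j, i ≠ j → ∀ x ∈ V i, ∀ y ∈ V j, ¬ G.Adj x y)
    {a b : ℕ} {i : Fin k} (hab : G.Adj a b) (ha : a ∈ V i) : b ∈ V i := by
  have hbS : b ∈ Finset.Icc 1 n := (hGS a b hab).2
  rw [← hcover] at hbS
  obtain ⟨j, -, hj⟩ := Finset.mem_biUnion.1 hbS
  by_cases h : j = i
  · exact h ▸ hj
  · exact absurd hab (hsep i j (Ne.symm h) a ha b hj)

lemma walk_comp (hGS : ∀ x y, G.Adj x y → x ∈ Finset.Icc 1 n ∧ y ∈ Finset.Icc 1 n)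
    (hcover : Finset.univ.biUnion V = Finset.Icc 1 n)
    (hsep : ∀ i j, i ≠ j → ∀ x ∈ V i, ∀ y ∈ V j, ¬ G.Adj x y)
    {s : Set ℕ} {i : Fin k} {u v : s} (p : (G.induce s).Walk u v)
    (hu : (u : ℕ) ∈ V i) : (v : ℕ) ∈ V i := by
  induction p with
  | nil => exact hu
  | @cons a b c h p ih =>
    exact ih (adj_comp hGS hcover hsep (by exact h) hu)

lemma connected_subset (hGS : ∀ x y, G.Adj x y → x ∈ Finset.Icc 1 n ∧ y ∈ Finset.Icc 1 n)
    (hcover : Finset.univ.biUnion V = Finset.Icc 1 n)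
    (hsep : ∀ i j, i ≠ j → ∀ x ∈ V i, ∀ y ∈ V j, ¬ G.Adj x y)
    {U : Finset ℕ} (hc : (G.induce (U : Set ℕ)).Connected)
    {x : ℕ} (hx : x ∈ U) {i : Fin k} (hxi : x ∈ V i) : U ⊆ V i := by
  intro y hy
  obtain ⟨p⟩ := hc.preconnected ⟨x, hx⟩ ⟨y, hy⟩
  exact walk_comp hGS hcover hsep p hxi

lemma mem_hatB_iff {W J : Finset ℕ} :
    J ∈ hatB G W ↔ (J ⊆ W ∧ J.Nonempty ∧ (G.induce (J : Set ℕ)).Connected) ∨ J = W := by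
  simp only [hatB, Finset.mem_union, Finset.mem_filter, Finset.mem_powerset,
    Finset.mem_singleton, and_assoc]

lemma V_subset (hcover : Finset.univ.biUnion V = Finset.Icc 1 n) (i : Fin k) :
    V i ⊆ Finset.Icc 1 n := by
  rw [← hcover]; exact Finset.subset_biUnion_of_mem V (Finset.mem_univ i)

lemma mem_hatB_Vi_iff (hconn : ∀ i, (G.induce ((V i : Finset ℕ) : Set ℕ)).Connected)
    (hne : ∀ i, (V i).Nonempty) {i : Fin k} {J : Finset ℕ} :
    J ∈ hatB G (V i) ↔ J ⊆ V i ∧ J.Nonempty ∧ (G.induce (J : Set ℕ)).Connected := by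
  rw [mem_hatB_iff]
  constructor
  · rintro (h | rfl)
    · exact h
    · exact ⟨Finset.Subset.refl _, hne i, hconn i⟩
  · exact Or.inl

lemma hatB_Vi_mem_hatB_S (hcover : Finset.univ.biUnion V = Finset.Icc 1 n)
    (hconn : ∀ i, (G.induce ((V i : Finset ℕ) : Set ℕ)).Connected)
    (hne : ∀ i, (V i).Nonempty) {i : Fin k} {J : Finset ℕ}
    (hJ : J ∈ hatB G (V i)) : J ∈ hatB G (Finset.Icc 1 n) := by
  rw [mem_hatB_Vi_iff hconn hne] at hJ
  exact mem_hatB_iff.2 (Or.inl ⟨hJ.1.trans (V_subset hcover i), hJ.2⟩)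

/-- The component index of a vertex. -/
def cIdx (V : Fin k → Finset ℕ) (hk : 0 < k) (v : ℕ) : Fin k :=
  if h : ∃ i, v ∈ V i then h.choose else ⟨0, hk⟩

lemma cIdx_mem (hcover : Finset.univ.biUnion V = Finset.Icc 1 n) (hk : 0 < k)
    {v : ℕ} (hv : v ∈ Finset.Icc 1 n) : v ∈ V (cIdx V hk v) := by
  rw [← hcover] at hv
  obtain ⟨j, -, hj⟩ := Finset.mem_biUnion.1 hv
  have h : ∃ i, v ∈ V i := ⟨j, hj⟩
  rw [cIdx, dif_pos h]
  exact h.choose_spec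

lemma cIdx_eq (hdisj : ∀ i j, i ≠ j → Disjoint (V i) (V j)) (hk : 0 < k)
    {v : ℕ} {i : Fin k} (hv : v ∈ V i) : cIdx V hk v = i := by
  have h : ∃ j, v ∈ V j := ⟨i, hv⟩
  rw [cIdx, dif_pos h]
  by_contra hne'
  simpa using (hdisj _ _ hne').le_bot (Finset.mem_inter.2 ⟨h.choose_spec, hv⟩)

end Comp
section Split

variable {n k : ℕ} {G : SimpleGraph ℕ} {V : Fin k → Finset ℕ}

/-- Bundle of the hypotheses of the main theorem (plus `0 < k`). -/
structure GSetup (n k : ℕ) (G : SimpleGraph ℕ) (V : Fin k → Finset ℕ) : Prop where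
  hGS : ∀ x y, G.Adj x y → x ∈ Finset.Icc 1 n ∧ y ∈ Finset.Icc 1 n
  hdisj : ∀ i j, i ≠ j → Disjoint (V i) (V j)
  hcover : Finset.univ.biUnion V = Finset.Icc 1 n
  hne : ∀ i, (V i).Nonempty
  hconn : ∀ i, (G.induce ((V i : Finset ℕ) : Set ℕ)).Connected
  hsep : ∀ i j, i ≠ j → ∀ x ∈ V i, ∀ y ∈ V j, ¬ G.Adj x y
  hk : 0 < k

namespace GSetup

variable (H : GSetup n k G V) {T : RTree (Finset.Icc 1 n)}
  (hB : IsBTree (Finset.Icc 1 n) (hatB G (Finset.Icc 1 n)) T)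

include H hB

omit hB in
lemma comp_unique {v : ℕ} {i j : Fin k} (h1 : v ∈ V i) (h2 : v ∈ V j) : i = j := by
  by_contra h
  simpa using (H.hdisj i j h).le_bot (Finset.mem_inter.2 ⟨h1, h2⟩)

lemma desc_comp {v : ℕ} (hv : v ∈ Finset.Icc 1 n) (hvr : v ≠ T.root)
    {i : Fin k} (hvi : v ∈ V i) : T.desc v ⊆ V i := by
  have h1 := hB.1 v hv
  rcases mem_hatB_iff.1 h1 with ⟨hsub, hne', hc⟩ | heq
  · exact connected_subset H.hGS H.hcover H.hsep hc (RTree.mem_desc_self hv) hvi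
  · exact absurd (RTree.root_mem_desc (heq.symm ▸ T.root_mem)).symm (Ne.symm hvr)

lemma parent_comp {v : ℕ} {i : Fin k} (hv : v ∈ V i) (hvr : v ≠ T.root)
    (hp : T.parent v ≠ T.root) : T.parent v ∈ V i := by
  have hvS := V_subset H.hcover i hv
  have hpS := T.parent_mem v hvS
  have hpi := cIdx_mem H.hcover H.hk hpS
  have hd := H.desc_comp hB hpS hp hpi
  have hvj : v ∈ V (cIdx V H.hk (T.parent v)) := hd (RTree.mem_desc_parent hvS)
  rwa [H.comp_unique hvj hv] at hpi

lemma exists_top {i : Fin k} (hir : T.root ∉ V i) :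
    ∀ m, ∀ w ∈ V i, T.parent^[m] w = T.root →
      ∃ v, v ∈ V i ∧ T.parent v = T.root ∧ w ∈ T.desc v := by
  intro m
  induction m with
  | zero =>
    intro w hw hm
    simp only [Function.iterate_zero, id_eq] at hm
    exact absurd (hm ▸ hw) hir
  | succ m ih =>
    intro w hw hm
    have hwS := V_subset H.hcover i hw
    have hwr : w ≠ T.root := fun h => hir (h ▸ hw)
    by_cases hp : T.parent w = T.root
    · exact ⟨w, hw, hp, RTree.mem_desc_self hwS⟩
    · have hpVi : T.parent w ∈ V i := H.parent_comp hB hw hwr hp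
      have hm' : T.parent^[m] (T.parent w) = T.root := by
        rwa [← Function.iterate_succ_apply]
      obtain ⟨v, hv1, hv2, hv3⟩ := ih (T.parent w) hpVi hm'
      exact ⟨v, hv1, hv2, RTree.mem_desc_trans (RTree.mem_desc_parent hwS) hv3⟩

lemma top_exists {i : Fin k} (hir : T.root ∉ V i) :
    ∃ v, v ∈ V i ∧ T.parent v = T.root := by
  obtain ⟨w, hw⟩ := H.hne i
  obtain ⟨m, hm⟩ := T.reach w (V_subset H.hcover i hw)
  obtain ⟨v, h1, h2, -⟩ := H.exists_top hB hir m w hw hm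
  exact ⟨v, h1, h2⟩

lemma top_unique {i : Fin k} (hir : T.root ∉ V i) {v1 v2 : ℕ}
    (h1 : v1 ∈ V i) (hp1 : T.parent v1 = T.root)
    (h2 : v2 ∈ V i) (hp2 : T.parent v2 = T.root) : v1 = v2 := by
  by_contra hne'
  set M := (V i).filter (fun v => T.parent v = T.root) with hM
  have hv1M : v1 ∈ M := Finset.mem_filter.2 ⟨h1, hp1⟩
  have hv2M : v2 ∈ M := Finset.mem_filter.2 ⟨h2, hp2⟩
  have hM2 : 2 ≤ M.card := by
    rw [show (2:ℕ) = 1 + 1 from rfl]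
    exact Finset.one_lt_card.2 ⟨v1, hv1M, v2, hv2M, hne'⟩
  have hMsub : M ⊆ Finset.Icc 1 n :=
    (Finset.filter_subset _ _).trans (V_subset H.hcover i)
  have hMne : ∀ v ∈ M, v ≠ T.root := by
    intro v hv h
    exact hir (h ▸ (Finset.mem_filter.1 hv).1)
  have hincomp : ∀ a ∈ M, ∀ b ∈ M, a ≠ b → a ∉ T.desc b ∧ b ∉ T.desc a := by
    have key : ∀ a ∈ M, ∀ b ∈ M, a ≠ b → a ∉ T.desc b := by
      intro a ha b hb hab hmem
      have := RTree.parent_mem_desc hmem hab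
      rw [(Finset.mem_filter.1 ha).2] at this
      exact hMne b hb (RTree.root_mem_desc this)
    intro a ha b hb hab
    exact ⟨key a ha b hb hab, key b hb a ha hab.symm⟩
  have hUnion : M.biUnion T.desc = V i := by
    apply Finset.Subset.antisymm
    · intro w hw
      obtain ⟨v, hvM, hvd⟩ := Finset.mem_biUnion.1 hw
      exact H.desc_comp hB (hMsub hvM) (hMne v hvM) (Finset.mem_filter.1 hvM).1 hvd
    · intro w hw
      obtain ⟨m, hm⟩ := T.reach w (V_subset H.hcover i hw)
      obtain ⟨v, ha, hb2, hc2⟩ := H.exists_top hB hir m w hw hm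
      exact Finset.mem_biUnion.2 ⟨v, Finset.mem_filter.2 ⟨ha, hb2⟩, hc2⟩
  have hViB : V i ∈ hatB G (Finset.Icc 1 n) :=
    mem_hatB_iff.2 (Or.inl ⟨V_subset H.hcover i, H.hne i, H.hconn i⟩)
  exact hB.2 M hMsub hM2 hincomp (hUnion ▸ hViB)

lemma desc_top {i : Fin k} (hir : T.root ∉ V i) {v : ℕ}
    (hv : v ∈ V i) (hp : T.parent v = T.root) : T.desc v = V i := by
  apply Finset.Subset.antisymm
  · exact H.desc_comp hB (V_subset H.hcover i hv) (fun h => hir (h ▸ hv)) hv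
  · intro w hw
    obtain ⟨m, hm⟩ := T.reach w (V_subset H.hcover i hw)
    obtain ⟨v', ha, hb2, hc2⟩ := H.exists_top hB hir m w hw hm
    rwa [H.top_unique hB hir ha hb2 hv hp] at hc2

end GSetup

end Split
section Split2

variable {n k : ℕ} {G : SimpleGraph ℕ} {V : Fin k → Finset ℕ}

namespace GSetup

variable (H : GSetup n k G V) (T : RTree (Finset.Icc 1 n))
  (hB : IsBTree (Finset.Icc 1 n) (hatB G (Finset.Icc 1 n)) T)

/-- The root of the component subtree: the root itself in the root's component,
and the unique child of the root lying in `V i` otherwise. -/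
def splitRoot (i : Fin k) : ℕ :=
  if h : T.root ∈ V i then T.root else (H.top_exists hB h).choose

lemma splitRoot_spec {i : Fin k} (hir : T.root ∉ V i) :
    H.splitRoot T hB i ∈ V i ∧ T.parent (H.splitRoot T hB i) = T.root := by
  rw [splitRoot, dif_neg hir]
  exact ⟨(H.top_exists hB hir).choose_spec.1, (H.top_exists hB hir).choose_spec.2⟩

lemma splitRoot_eq {i : Fin k} (h : T.root ∈ V i) : H.splitRoot T hB i = T.root :=
  dif_pos h

lemma splitRoot_mem (i : Fin k) : H.splitRoot T hB i ∈ V i := by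
  by_cases h : T.root ∈ V i
  · rw [H.splitRoot_eq T hB h]; exact h
  · exact (H.splitRoot_spec T hB h).1

lemma ne_root_of_ne_splitRoot {i : Fin k} {v : ℕ} (hv : v ∈ V i)
    (hs : v ≠ H.splitRoot T hB i) : v ≠ T.root := by
  intro h
  exact hs (by rw [h, H.splitRoot_eq T hB (h ▸ hv)])

lemma parent_in {i : Fin k} {v : ℕ} (hv : v ∈ V i)
    (hs : v ≠ H.splitRoot T hB i) : T.parent v ∈ V i := by
  have hvr : v ≠ T.root := H.ne_root_of_ne_splitRoot T hB hv hs
  by_cases hp : T.parent v = T.root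
  · by_cases hroot : T.root ∈ V i
    · rw [hp]; exact hroot
    · exact absurd (H.top_unique hB hroot hv hp (H.splitRoot_spec T hB hroot).1
        (H.splitRoot_spec T hB hroot).2) hs
  · exact H.parent_comp hB hv hvr hp

/-- The component subtree of a `B̂(G)`-tree on the component `V i`. -/
def splitTree (i : Fin k) : RTree (V i) where
  root := H.splitRoot T hB i
  root_mem := H.splitRoot_mem T hB i
  parent := fun v => if v ∈ V i ∧ v ≠ H.splitRoot T hB i then T.parent v else v
  parent_out := fun v hv => if_neg (fun hc => hv hc.1)
  parent_root := if_neg (fun hc => hc.2 rfl)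
  parent_mem := fun v hv => by
    show (if v ∈ V i ∧ v ≠ H.splitRoot T hB i then T.parent v else v) ∈ V i
    by_cases h : v = H.splitRoot T hB i
    · rw [if_neg (fun hc => hc.2 h)]; exact hv
    · rw [if_pos ⟨hv, h⟩]; exact H.parent_in T hB hv h
  reach := by
    intro w hw
    obtain ⟨m, hm⟩ := T.reach w (V_subset H.hcover i hw)
    induction m generalizing w with
    | zero =>
      simp only [Function.iterate_zero, id_eq] at hm
      exact ⟨0, by simp [hm, H.splitRoot_eq T hB (hm ▸ hw)]⟩
    | succ m ih =>
      by_cases hs : w = H.splitRoot T hB i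
      · exact ⟨0, hs⟩
      · have hp : T.parent w ∈ V i := H.parent_in T hB hw hs
        have hm' : T.parent^[m] (T.parent w) = T.root := by
          rwa [← Function.iterate_succ_apply]
        obtain ⟨m', hm'2⟩ := ih (T.parent w) hp hm'
        refine ⟨m' + 1, ?_⟩
        rw [Function.iterate_succ_apply]
        have heq : (fun v => if v ∈ V i ∧ v ≠ H.splitRoot T hB i then T.parent v
            else v) w = T.parent w := if_pos ⟨hw, hs⟩
        simp only at heq ⊢
        rw [heq]
        exact hm'2

lemma splitTree_parent_apply {i : Fin k} {v : ℕ} (hv : v ∈ V i)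
    (hs : v ≠ H.splitRoot T hB i) : (H.splitTree T hB i).parent v = T.parent v :=
  if_pos ⟨hv, hs⟩

lemma splitTree_root (i : Fin k) : (H.splitTree T hB i).root = H.splitRoot T hB i := rfl

lemma splitRoot_not_mem_desc {i : Fin k} {v : ℕ} (hv : v ∈ V i)
    (hs : v ≠ H.splitRoot T hB i) : H.splitRoot T hB i ∉ T.desc v := by
  by_cases hroot : T.root ∈ V i
  · rw [H.splitRoot_eq T hB hroot]
    intro hc
    exact hs (by rw [RTree.root_mem_desc hc, H.splitRoot_eq T hB hroot])
  · intro hc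
    have hdt : T.desc (H.splitRoot T hB i) = V i :=
      H.desc_top hB hroot (H.splitRoot_spec T hB hroot).1 (H.splitRoot_spec T hB hroot).2
    have hvd : v ∈ T.desc (H.splitRoot T hB i) := by rw [hdt]; exact hv
    exact hs (RTree.desc_antisymm hvd hc)

lemma splitTree_desc {i : Fin k} {v : ℕ} (hv : v ∈ V i)
    (hs : v ≠ H.splitRoot T hB i) : (H.splitTree T hB i).desc v = T.desc v := by
  have hvS : v ∈ Finset.Icc 1 n := V_subset H.hcover i hv
  apply Finset.Subset.antisymm
  · have claim : ∀ m w, w ∈ V i → (H.splitTree T hB i).parent^[m] w = v →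
        w ∈ T.desc v := by
      intro m
      induction m with
      | zero =>
        intro w hw hm
        simp only [Function.iterate_zero, id_eq] at hm
        subst hm
        exact RTree.mem_desc_self hvS
      | succ m ih =>
        intro w hw hm
        by_cases hws : w = H.splitRoot T hB i
        · exfalso
          have hfix : (H.splitTree T hB i).parent w = w :=
            if_neg (fun hc => hc.2 hws)
          rw [Function.iterate_fixed hfix] at hm
          exact hs (hm ▸ hws)
        · have hp : T.parent w ∈ V i := H.parent_in T hB hw hws
          rw [Function.iterate_succ_apply,
            H.splitTree_parent_apply T hB hw hws] at hm
          have := ih (T.parent w) hp hm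
          exact RTree.mem_desc_trans
            (RTree.mem_desc_parent (V_subset H.hcover i hw)) this
    intro w hw
    obtain ⟨hwVi, m, hm⟩ := RTree.mem_desc.1 hw
    exact claim m w hwVi hm
  · have claim : ∀ m w, w ∈ V i → T.parent^[m] w = v →
        w ∈ (H.splitTree T hB i).desc v := by
      intro m
      induction m with
      | zero =>
        intro w hw hm
        simp only [Function.iterate_zero, id_eq] at hm
        subst hm
        exact RTree.mem_desc_self hw
      | succ m ih =>
        intro w hw hm
        have hwTd : w ∈ T.desc v :=
          RTree.mem_desc.2 ⟨V_subset H.hcover i hw, m + 1, hm⟩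
        have hws : w ≠ H.splitRoot T hB i := by
          intro h
          exact H.splitRoot_not_mem_desc T hB hv hs (h ▸ hwTd)
        have hp : T.parent w ∈ V i := H.parent_in T hB hw hws
        rw [Function.iterate_succ_apply] at hm
        have := ih (T.parent w) hp hm
        refine RTree.mem_desc_trans ?_ this
        have h1 : w ∈ (H.splitTree T hB i).desc ((H.splitTree T hB i).parent w) :=
          RTree.mem_desc_parent hw
        rwa [H.splitTree_parent_apply T hB hw hws] at h1
    intro w hw
    obtain ⟨hwS, m, hm⟩ := RTree.mem_desc.1 hw
    exact claim m w
      (H.desc_comp hB hvS (H.ne_root_of_ne_splitRoot T hB hv hs) hv hw) hm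

lemma splitTree_desc_root (i : Fin k) :
    (H.splitTree T hB i).desc (H.splitRoot T hB i) = V i := by
  apply Finset.Subset.antisymm (RTree.desc_subset _ _)
  intro w hw
  exact RTree.mem_desc.2 ⟨hw, (H.splitTree T hB i).reach w hw⟩

lemma splitTree_isBTree (i : Fin k) :
    IsBTree (V i) (hatB G (V i)) (H.splitTree T hB i) := by
  constructor
  · intro v hv
    by_cases hsv : v = H.splitRoot T hB i
    · rw [hsv, H.splitTree_desc_root T hB]
      exact (mem_hatB_Vi_iff H.hconn H.hne).2
        ⟨Finset.Subset.refl _, H.hne i, H.hconn i⟩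
    · rw [H.splitTree_desc T hB hv hsv]
      have h1 := hB.1 v (V_subset H.hcover i hv)
      rcases mem_hatB_iff.1 h1 with ⟨-, hne', hc⟩ | heq
      · exact (mem_hatB_Vi_iff H.hconn H.hne).2
          ⟨H.desc_comp hB (V_subset H.hcover i hv)
            (H.ne_root_of_ne_splitRoot T hB hv hsv) hv, hne', hc⟩
      · exact absurd (RTree.root_mem_desc (heq.symm ▸ T.root_mem))
          (Ne.symm (fun h => (H.ne_root_of_ne_splitRoot T hB hv hsv) h.symm))
  · intro I hIsub hIcard hinc hmem
    have hsR : H.splitRoot T hB i ∉ I := by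
      intro hR
      obtain ⟨b, hbI, hbne⟩ :=
        Finset.exists_mem_ne (show 1 < I.card by omega) (H.splitRoot T hB i)
      have hbd : b ∈ (H.splitTree T hB i).desc (H.splitRoot T hB i) := by
        rw [H.splitTree_desc_root T hB]; exact hIsub hbI
      exact (hinc b hbI _ hR hbne).1 hbd
    have hdesc : ∀ a ∈ I, (H.splitTree T hB i).desc a = T.desc a := fun a ha =>
      H.splitTree_desc T hB (hIsub ha) (fun h => hsR (h ▸ ha))
    have hbu : I.biUnion (H.splitTree T hB i).desc = I.biUnion T.desc :=
      Finset.biUnion_congr rfl hdesc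
    refine hB.2 I (hIsub.trans (V_subset H.hcover i)) hIcard ?_ ?_
    · intro a ha b hbI hab
      have := hinc a ha b hbI hab
      rwa [hdesc a ha, hdesc b hbI] at this
    · rw [← hbu]
      exact hatB_Vi_mem_hatB_S H.hcover H.hconn H.hne hmem

end GSetup

end Split2
section Glue

variable {n k : ℕ} {G : SimpleGraph ℕ} {V : Fin k → Finset ℕ}

namespace GSetup

variable (H : GSetup n k G V) (c : Fin k) (g : ∀ i, RTree (V i))

/-- The parent function of the glued tree. -/
def glueParent : ℕ → ℕ := fun v =>
  if hv : v ∈ Finset.Icc 1 n then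
    (if v = (g (cIdx V H.hk v)).root ∧ cIdx V H.hk v ≠ c then (g c).root
     else (g (cIdx V H.hk v)).parent v)
  else v

lemma glueParent_eq_parent {i : Fin k} {v : ℕ} (hv : v ∈ V i)
    (h : ¬(v = (g i).root ∧ i ≠ c)) : H.glueParent c g v = (g i).parent v := by
  have hvS : v ∈ Finset.Icc 1 n := V_subset H.hcover i hv
  have hci : cIdx V H.hk v = i := cIdx_eq H.hdisj H.hk hv
  rw [glueParent, dif_pos hvS, hci, if_neg h]

lemma glueParent_top {i : Fin k} {v : ℕ} (hv : v ∈ V i)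
    (hroot : v = (g i).root) (hic : i ≠ c) : H.glueParent c g v = (g c).root := by
  have hvS : v ∈ Finset.Icc 1 n := V_subset H.hcover i hv
  have hci : cIdx V H.hk v = i := cIdx_eq H.hdisj H.hk hv
  rw [glueParent, dif_pos hvS, hci, if_pos ⟨hroot, hic⟩]

lemma glueParent_reach :
    ∀ (i : Fin k) (m : ℕ) (w : ℕ), w ∈ V i → (g i).parent^[m] w = (g i).root →
      ∃ m', (H.glueParent c g)^[m'] w = (g c).root := by
  intro i m
  induction m with
  | zero =>
    intro w hw hm
    simp only [Function.iterate_zero, id_eq] at hm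
    by_cases hic : i = c
    · subst hic; exact ⟨0, hm⟩
    · exact ⟨1, by rw [Function.iterate_one]; exact H.glueParent_top c g hw hm hic⟩
  | succ m ih =>
    intro w hw hm
    by_cases hroot : w = (g i).root
    · by_cases hic : i = c
      · subst hic; exact ⟨0, hroot⟩
      · exact ⟨1, by rw [Function.iterate_one]; exact H.glueParent_top c g hw hroot hic⟩
    · have hcond : ¬(w = (g i).root ∧ i ≠ c) := fun hc' => hroot hc'.1
      have hp : (g i).parent w ∈ V i := (g i).parent_mem w hw
      have hm' : (g i).parent^[m] ((g i).parent w) = (g i).root := by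
        rwa [← Function.iterate_succ_apply]
      obtain ⟨m', hm'2⟩ := ih ((g i).parent w) hp hm'
      refine ⟨m' + 1, ?_⟩
      rw [Function.iterate_succ_apply, H.glueParent_eq_parent c g hw hcond]
      exact hm'2

/-- The glued tree on `[n]`: component trees `g i`, with the roots of the
non-root components attached as children of the root of `g c`. -/
def glue : RTree (Finset.Icc 1 n) where
  root := (g c).root
  root_mem := V_subset H.hcover c (g c).root_mem
  parent := H.glueParent c g
  parent_out := fun v hv => dif_neg hv
  parent_root := by
    rw [H.glueParent_eq_parent c g (g c).root_mem (fun hc' => hc'.2 rfl)]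
    exact (g c).parent_root
  parent_mem := fun v hv => by
    have hvi : v ∈ V (cIdx V H.hk v) := cIdx_mem H.hcover H.hk hv
    by_cases h : v = (g (cIdx V H.hk v)).root ∧ cIdx V H.hk v ≠ c
    · rw [glueParent, dif_pos hv, if_pos h]
      exact V_subset H.hcover c (g c).root_mem
    · rw [H.glueParent_eq_parent c g hvi h]
      exact V_subset H.hcover _ ((g _).parent_mem v hvi)
  reach := fun w hw => by
    have hwi : w ∈ V (cIdx V H.hk w) := cIdx_mem H.hcover H.hk hw
    obtain ⟨m, hm⟩ := (g _).reach w hwi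
    exact H.glueParent_reach c g _ m w hwi hm

lemma glue_root : (H.glue c g).root = (g c).root := rfl

lemma glue_parent : (H.glue c g).parent = H.glueParent c g := rfl

lemma glue_desc {i : Fin k} {v : ℕ} (hv : v ∈ V i) (hvr : v ≠ (g c).root) :
    (H.glue c g).desc v = (g i).desc v := by
  have hvS : v ∈ Finset.Icc 1 n := V_subset H.hcover i hv
  apply Finset.Subset.antisymm
  · have claim : ∀ m w, w ∈ Finset.Icc 1 n → (H.glue c g).parent^[m] w = v →
        w ∈ (g i).desc v := by
      intro m
      induction m with
      | zero =>
        intro w hw hm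
        simp only [Function.iterate_zero, id_eq] at hm
        subst hm
        exact RTree.mem_desc_self hv
      | succ m ih =>
        intro w hw hm
        have hwj : w ∈ V (cIdx V H.hk w) := cIdx_mem H.hcover H.hk hw
        by_cases htop : w = (g (cIdx V H.hk w)).root ∧ cIdx V H.hk w ≠ c
        · exfalso
          rw [Function.iterate_succ_apply, glue_parent,
            H.glueParent_top c g hwj htop.1 htop.2] at hm
          have hfix := RTree.parent_iterate_root (H.glue c g) m
          rw [glue_root, glue_parent] at hfix
          rw [hfix] at hm
          exact hvr hm.symm
        · rw [Function.iterate_succ_apply, glue_parent,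
            H.glueParent_eq_parent c g hwj htop] at hm
          have hp : (g _).parent w ∈ V (cIdx V H.hk w) := (g _).parent_mem w hwj
          have hmem := ih ((g _).parent w) (V_subset H.hcover _ hp) hm
          have hji : cIdx V H.hk w = i :=
            H.comp_unique hp (RTree.desc_subset (g i) v hmem)
          rw [hji] at hwj
          refine RTree.mem_desc_trans (RTree.mem_desc_parent hwj) ?_
          rw [hji] at hmem
          exact hmem
    intro w hw
    obtain ⟨hwS, m, hm⟩ := RTree.mem_desc.1 hw
    exact claim m w hwS hm
  · have claim : ∀ m w, w ∈ V i → (g i).parent^[m] w = v →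
        w ∈ (H.glue c g).desc v := by
      intro m
      induction m with
      | zero =>
        intro w hw hm
        simp only [Function.iterate_zero, id_eq] at hm
        subst hm
        exact RTree.mem_desc_self (V_subset H.hcover i hw)
      | succ m ih =>
        intro w hw hm
        by_cases hwv : w = v
        · subst hwv; exact RTree.mem_desc_self (V_subset H.hcover i hw)
        · by_cases hroot : w = (g i).root
          · exfalso
            have hfix : (g i).parent w = w := hroot ▸ (hroot ▸ (g i).parent_root)
            rw [Function.iterate_fixed hfix] at hm
            exact hwv hm
          · have hcond : ¬(w = (g i).root ∧ i ≠ c) := fun hc' => hroot hc'.1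
            have hp : (g i).parent w ∈ V i := (g i).parent_mem w hw
            rw [Function.iterate_succ_apply] at hm
            have hmem := ih ((g i).parent w) hp hm
            refine RTree.mem_desc_trans ?_ hmem
            have h1 := RTree.mem_desc_parent (T := H.glue c g)
              (V_subset H.hcover i hw) (v := w)
            rwa [glue_parent, H.glueParent_eq_parent c g hw hcond] at h1
    intro w hw
    obtain ⟨hwVi, m, hm⟩ := RTree.mem_desc.1 hw
    exact claim m w hwVi hm

lemma glue_isBTree (hg : ∀ i, IsBTree (V i) (hatB G (V i)) (g i)) :
    IsBTree (Finset.Icc 1 n) (hatB G (Finset.Icc 1 n)) (H.glue c g) := by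
  constructor
  · intro v hv
    by_cases hvr : v = (g c).root
    · have : (H.glue c g).desc v = Finset.Icc 1 n := by
        rw [hvr, ← glue_root]; exact RTree.desc_root _
      rw [this]
      exact mem_hatB_iff.2 (Or.inr rfl)
    · have hvi : v ∈ V (cIdx V H.hk v) := cIdx_mem H.hcover H.hk hv
      rw [H.glue_desc c g hvi hvr]
      exact hatB_Vi_mem_hatB_S H.hcover H.hconn H.hne ((hg _).1 v hvi)
  · intro I hIsub hIcard hinc hmem
    have hrI : (g c).root ∉ I := by
      intro hR
      obtain ⟨b, hbI, hbne⟩ :=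
        Finset.exists_mem_ne (show 1 < I.card by omega) ((g c).root)
      have hbd : b ∈ (H.glue c g).desc ((g c).root) := by
        rw [← H.glue_root c g, RTree.desc_root]; exact hIsub hbI
      exact (hinc b hbI _ hR hbne).1 hbd
    rcases mem_hatB_iff.1 hmem with ⟨hUsub, hUne, hUconn⟩ | hUeq
    · obtain ⟨x, hx⟩ := hUne
      obtain ⟨a, haI, hax⟩ := Finset.mem_biUnion.1 hx
      have haVi : a ∈ V (cIdx V H.hk a) := cIdx_mem H.hcover H.hk (hIsub haI)
      have hxa : x ∈ V (cIdx V H.hk a) := by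
        have := H.glue_desc c g haVi (fun h => hrI (h ▸ haI))
        exact RTree.desc_subset (g _) a (this ▸ hax)
      set j := cIdx V H.hk a with hj
      have hUVj : I.biUnion (H.glue c g).desc ⊆ V j :=
        connected_subset H.hGS H.hcover H.hsep hUconn hx hxa
      have hIVj : I ⊆ V j := by
        intro b hbI
        exact hUVj (Finset.mem_biUnion.2
          ⟨b, hbI, RTree.mem_desc_self (hIsub hbI)⟩)
      have hdesc : ∀ b ∈ I, (H.glue c g).desc b = (g j).desc b := fun b hbI =>
        H.glue_desc c g (hIVj hbI) (fun h => hrI (h ▸ hbI))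
      have hbu : I.biUnion (H.glue c g).desc = I.biUnion (g j).desc :=
        Finset.biUnion_congr rfl hdesc
      refine (hg j).2 I hIVj hIcard ?_ ?_
      · intro a' ha' b hbI hab
        have := hinc a' ha' b hbI hab
        rwa [hdesc a' ha', hdesc b hbI] at this
      · rw [← hbu]
        exact (mem_hatB_Vi_iff H.hconn H.hne).2 ⟨hUVj, ⟨x, hx⟩, hUconn⟩
    · have : (g c).root ∈ I.biUnion (H.glue c g).desc := by
        rw [hUeq, ← glue_root]; exact (H.glue c g).root_mem
      obtain ⟨a, haI, hax⟩ := Finset.mem_biUnion.1 this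
      rw [← H.glue_root c g] at hax
      exact hrI ((RTree.root_mem_desc hax) ▸ haI)

end GSetup

end Glue
section Inv

variable {n k : ℕ} {G : SimpleGraph ℕ} {V : Fin k → Finset ℕ}

namespace GSetup

variable (H : GSetup n k G V)

include H

lemma root_not_mem {c i : Fin k} (g : ∀ i, RTree (V i)) (hic : i ≠ c) {v : ℕ}
    (hv : v ∈ V i) : v ≠ (g c).root :=
  fun h => hic (H.comp_unique hv (h ▸ (g c).root_mem))

lemma splitRoot_glue (c : Fin k) (g : ∀ i, RTree (V i))
    (hB' : IsBTree (Finset.Icc 1 n) (hatB G (Finset.Icc 1 n)) (H.glue c g))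
    (i : Fin k) : H.splitRoot (H.glue c g) hB' i = (g i).root := by
  by_cases hic : i = c
  · subst hic
    exact H.splitRoot_eq (H.glue i g) hB' (show (H.glue i g).root ∈ V i from (g i).root_mem)
  · have hir : (H.glue c g).root ∉ V i := fun h =>
      hic (H.comp_unique h (g c).root_mem)
    have hgr : (H.glue c g).parent ((g i).root) = (H.glue c g).root := by
      rw [glue_parent, H.glueParent_top c g (g i).root_mem rfl hic, glue_root]
    exact H.top_unique hB' hir (H.splitRoot_spec (H.glue c g) hB' hir).1
      (H.splitRoot_spec (H.glue c g) hB' hir).2 (g i).root_mem hgr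

lemma splitTree_glue (c : Fin k) (g : ∀ i, RTree (V i))
    (hB' : IsBTree (Finset.Icc 1 n) (hatB G (Finset.Icc 1 n)) (H.glue c g))
    (i : Fin k) : H.splitTree (H.glue c g) hB' i = g i := by
  apply RTree.ext'
  · exact H.splitRoot_glue c g hB' i
  · funext v
    show (if v ∈ V i ∧ v ≠ H.splitRoot (H.glue c g) hB' i
        then (H.glue c g).parent v else v) = (g i).parent v
    rw [H.splitRoot_glue c g hB' i]
    by_cases hvi : v ∈ V i
    · by_cases hvr : v = (g i).root
      · rw [if_neg (fun hc' => hc'.2 hvr), hvr, (g i).parent_root]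
      · rw [if_pos ⟨hvi, hvr⟩, glue_parent,
          H.glueParent_eq_parent c g hvi (fun hc' => hvr hc'.1)]
    · rw [if_neg (fun hc' => hvi hc'.1), (g i).parent_out v hvi]

lemma glue_split {T : RTree (Finset.Icc 1 n)}
    (hB : IsBTree (Finset.Icc 1 n) (hatB G (Finset.Icc 1 n)) T) :
    H.glue (cIdx V H.hk T.root) (fun i => H.splitTree T hB i) = T := by
  set c := cIdx V H.hk T.root with hc
  have hrc : T.root ∈ V c := cIdx_mem H.hcover H.hk T.root_mem
  apply RTree.ext'
  · show H.splitRoot T hB c = T.root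
    exact H.splitRoot_eq T hB hrc
  · funext v
    show H.glueParent c (fun i => H.splitTree T hB i) v = T.parent v
    by_cases hvS : v ∈ Finset.Icc 1 n
    · have hvi : v ∈ V (cIdx V H.hk v) := cIdx_mem H.hcover H.hk hvS
      set i := cIdx V H.hk v with hi
      by_cases htop : v = (H.splitTree T hB i).root ∧ i ≠ c
      · have hir : T.root ∉ V i := fun h => htop.2 (H.comp_unique h hrc)
        rw [H.glueParent_top c (fun i => H.splitTree T hB i) hvi htop.1 htop.2]
        show (H.splitTree T hB c).root = T.parent v
        have hv' : v = H.splitRoot T hB i := htop.1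
        rw [show (H.splitTree T hB c).root = H.splitRoot T hB c from rfl,
          H.splitRoot_eq T hB hrc, hv', (H.splitRoot_spec T hB hir).2]
      · rw [H.glueParent_eq_parent c (fun i => H.splitTree T hB i) hvi htop]
        show (if v ∈ V i ∧ v ≠ H.splitRoot T hB i then T.parent v else v) = T.parent v
        by_cases hvr : v = H.splitRoot T hB i
        · rw [if_neg (fun hc' => hc'.2 hvr)]
          have hic : i = c := by
            by_contra hic
            exact htop ⟨hvr, hic⟩
          have hvroot : v = T.root := by
            rw [hvr, hic, H.splitRoot_eq T hB hrc]
          rw [hvroot, T.parent_root]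
        · rw [if_pos ⟨hvi, hvr⟩]
    · have h1 : H.glueParent c (fun i => H.splitTree T hB i) v = v := dif_neg hvS
      rw [h1, T.parent_out v hvS]

lemma mem_glue_desSet (c : Fin k) (g : ∀ i, RTree (V i)) {v : ℕ} {i : Fin k}
    (hv : v ∈ V i) :
    v ∈ (H.glue c g).desSet ↔
      (v ∈ (g i).desSet ∨ (i ≠ c ∧ v = (g i).root ∧ (g c).root < v)) := by
  have hvS : v ∈ Finset.Icc 1 n := V_subset H.hcover i hv
  rw [RTree.desSet, Finset.mem_filter, RTree.desSet, Finset.mem_filter, glue_root,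
    glue_parent]
  by_cases hroot : v = (g i).root
  · by_cases hic : i = c
    · subst hic
      constructor
      · rintro ⟨-, hne', -⟩; exact absurd hroot hne'
      · rintro (⟨-, hne', -⟩ | ⟨hic, -, -⟩)
        · exact absurd hroot hne'
        · exact absurd rfl hic
    · have hvne : v ≠ (g c).root := H.root_not_mem g hic hv
      rw [H.glueParent_top c g hv hroot hic]
      constructor
      · rintro ⟨-, -, hlt⟩; exact Or.inr ⟨hic, hroot, hlt⟩
      · rintro (⟨-, hne', -⟩ | ⟨-, -, hlt⟩)
        · exact absurd hroot hne'
        · exact ⟨hvS, hvne, hlt⟩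
  · have hcond : ¬(v = (g i).root ∧ i ≠ c) := fun hc' => hroot hc'.1
    rw [H.glueParent_eq_parent c g hv hcond]
    have hvne : v ≠ (g c).root := by
      by_cases hic : i = c
      · subst hic; exact hroot
      · exact H.root_not_mem g hic hv
    constructor
    · rintro ⟨-, -, hlt⟩; exact Or.inl ⟨hv, hroot, hlt⟩
    · rintro (⟨-, -, hlt⟩ | ⟨-, hr, -⟩)
      · exact ⟨hvS, hvne, hlt⟩
      · exact absurd hr hroot

lemma glue_desSet_inter (c : Fin k) (g : ∀ i, RTree (V i)) (i : Fin k) :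
    (H.glue c g).desSet ∩ V i = (g i).desSet ∪
      (if i ≠ c ∧ (g c).root < (g i).root then {(g i).root} else ∅) := by
  ext v
  rw [Finset.mem_inter, Finset.mem_union]
  constructor
  · rintro ⟨hd, hv⟩
    rcases (H.mem_glue_desSet c g hv).1 hd with h | ⟨hic, hr, hlt⟩
    · exact Or.inl h
    · refine Or.inr ?_
      rw [if_pos ⟨hic, hr ▸ hlt⟩, Finset.mem_singleton]
      exact hr
  · intro h
    rcases h with h | h
    · have hv : v ∈ V i := (Finset.filter_subset _ _) h
      exact ⟨(H.mem_glue_desSet c g hv).2 (Or.inl h), hv⟩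
    · by_cases hcond : i ≠ c ∧ (g c).root < (g i).root
      · rw [if_pos hcond, Finset.mem_singleton] at h
        subst h
        exact ⟨(H.mem_glue_desSet c g (g i).root_mem).2
          (Or.inr ⟨hcond.1, rfl, hcond.2⟩), (g i).root_mem⟩
      · rw [if_neg hcond] at h
        exact absurd h (Finset.notMem_empty v)

lemma glue_des (c : Fin k) (g : ∀ i, RTree (V i)) :
    (H.glue c g).des = (∑ i : Fin k, (g i).des) +
      (Finset.univ.filter (fun j => (g c).root < (g j).root)).card := by
  have hsub : (H.glue c g).desSet ⊆ Finset.Icc 1 n := Finset.filter_subset _ _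
  have hpart : (H.glue c g).desSet =
      Finset.univ.biUnion (fun i => (H.glue c g).desSet ∩ V i) := by
    ext v
    simp only [Finset.mem_biUnion, Finset.mem_inter, Finset.mem_univ, true_and]
    constructor
    · intro hv
      have := hsub hv
      rw [← H.hcover] at this
      obtain ⟨j, -, hj⟩ := Finset.mem_biUnion.1 this
      exact ⟨j, hv, hj⟩
    · rintro ⟨j, hv, -⟩; exact hv
  have hdisj' : ∀ i ∈ Finset.univ, ∀ j ∈ Finset.univ, i ≠ j →
      Disjoint ((H.glue c g).desSet ∩ V i) ((H.glue c g).desSet ∩ V j) := by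
    intro i _ j _ hij
    exact ((H.hdisj i j hij).mono (Finset.inter_subset_right)
      (Finset.inter_subset_right))
  rw [RTree.des, hpart, Finset.card_biUnion hdisj']
  have hterm : ∀ i : Fin k, ((H.glue c g).desSet ∩ V i).card =
      (g i).des + (if i ≠ c ∧ (g c).root < (g i).root then 1 else 0) := by
    intro i
    rw [H.glue_desSet_inter c g i, Finset.card_union_of_disjoint, RTree.des]
    · congr 1
      by_cases hcond : i ≠ c ∧ (g c).root < (g i).root
      · rw [if_pos hcond, if_pos hcond, Finset.card_singleton]
      · rw [if_neg hcond, if_neg hcond, Finset.card_empty]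
    · by_cases hcond : i ≠ c ∧ (g c).root < (g i).root
      · rw [if_pos hcond]
        rw [Finset.disjoint_singleton_right, RTree.desSet, Finset.mem_filter]
        rintro ⟨-, hne', -⟩
        exact hne' rfl
      · rw [if_neg hcond]; exact Finset.disjoint_empty_right _
  rw [Finset.sum_congr rfl (fun i _ => hterm i), Finset.sum_add_distrib]
  congr 1
  rw [Finset.card_filter]
  apply Finset.sum_congr rfl
  intro i _
  by_cases hic : i = c
  · subst hic; simp
  · simp [hic]

end GSetup

/-- Summing `X^(number of larger values)` over an injective family gives
`1 + X + ⋯ + X^(k-1)`. -/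
lemma rank_sum {k : ℕ} (r : Fin k → ℕ) (hr : Function.Injective r) :
    ∑ c : Fin k, (Polynomial.X : Polynomial ℤ) ^
        (Finset.univ.filter (fun j => r c < r j)).card
      = ∑ m ∈ Finset.range k, (Polynomial.X : Polynomial ℤ) ^ m := by
  set f : Fin k → ℕ := fun c => (Finset.univ.filter (fun j => r c < r j)).card with hf
  have hlt : ∀ c, f c < k := by
    intro c
    have h1 : Finset.univ.filter (fun j => r c < r j) ⊆ Finset.univ.erase c := by
      intro j hj
      rw [Finset.mem_filter] at hj
      exact Finset.mem_erase.2 ⟨fun h => by simp [h] at hj, Finset.mem_univ j⟩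
    have h2 := Finset.card_le_card h1
    rw [Finset.card_erase_of_mem (Finset.mem_univ c), Finset.card_univ,
      Fintype.card_fin] at h2
    have h2' : f c ≤ k - 1 := h2
    have hk : 0 < k := c.pos
    omega
  have hinj : Function.Injective (fun c => (⟨f c, hlt c⟩ : Fin k)) := by
    intro a b hab
    simp only [Fin.mk.injEq] at hab
    by_contra hne'
    have hrne : r a ≠ r b := fun h => hne' (hr h)
    have key : ∀ x y : Fin k, r x < r y → f y < f x := by
      intro x y hxy
      apply Finset.card_lt_card
      constructor
      · intro j hj
        rw [Finset.mem_filter] at hj ⊢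
        exact ⟨hj.1, hxy.trans hj.2⟩
      · intro hsub
        have : y ∈ Finset.univ.filter (fun j => r x < r j) :=
          Finset.mem_filter.2 ⟨Finset.mem_univ y, hxy⟩
        have := Finset.mem_filter.1 (hsub this)
        exact lt_irrefl _ this.2
    rcases lt_or_gt_of_ne hrne with h | h
    · exact absurd hab (Nat.ne_of_gt (key a b h))
    · exact absurd hab (Nat.ne_of_lt (key b a h))
  have hbij : Function.Bijective (fun c => (⟨f c, hlt c⟩ : Fin k)) :=
    (Finite.injective_iff_bijective).1 hinj
  calc ∑ c : Fin k, (Polynomial.X : Polynomial ℤ) ^ f c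
      = ∑ c : Fin k, (Polynomial.X : Polynomial ℤ) ^ ((⟨f c, hlt c⟩ : Fin k) : ℕ) := rfl
    _ = ∑ m : Fin k, (Polynomial.X : Polynomial ℤ) ^ (m : ℕ) :=
        Function.Bijective.sum_comp hbij (fun m : Fin k => (Polynomial.X : Polynomial ℤ) ^ (m : ℕ))
    _ = ∑ m ∈ Finset.range k, (Polynomial.X : Polynomial ℤ) ^ m :=
        Fin.sum_univ_eq_sum_range _ k

end Inv
lemma finsum_mem_setOf_eq {α M : Type*} [AddCommMonoid M] [Finite α]
    (p : α → Prop) (f : α → M) :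
    (∑ᶠ x ∈ {x | p x}, f x) = ∑ x ∈ (Set.toFinite {x | p x}).toFinset, f x := by
  exact finsum_mem_eq_finite_toFinset_sum f (Set.toFinite {x | p x})

/-- If the simple graph `G` on `[n]` has connected components
`G₁, …, G_k` (with vertex sets `V 0, …, V (k-1)`), then
`h_G(t) = (1 + t + ⋯ + t^{k−1}) ∏ᵢ h_{Gᵢ}(t)` in `ℤ[t]`, where `h` denotes the
`h`-polynomial of the corresponding connected graphical building set. -/
theorem hPoly_disconnected_graph
    (n : ℕ) (G : SimpleGraph ℕ)
    (hGS : ∀ x y, G.Adj x y → x ∈ Finset.Icc 1 n ∧ y ∈ Finset.Icc 1 n)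
    (k : ℕ) (V : Fin k → Finset ℕ)
    (hdisj : ∀ i j, i ≠ j → Disjoint (V i) (V j))
    (hcover : Finset.univ.biUnion V = Finset.Icc 1 n)
    (hne : ∀ i, (V i).Nonempty)
    (hconn : ∀ i, (G.induce ((V i : Finset ℕ) : Set ℕ)).Connected)
    (hsep : ∀ i j, i ≠ j → ∀ x ∈ V i, ∀ y ∈ V j, ¬ G.Adj x y) :
    (∑ᶠ T ∈ {T : RTree (Finset.Icc 1 n) |
        IsBTree (Finset.Icc 1 n) (hatB G (Finset.Icc 1 n)) T},
        (Polynomial.X : Polynomial ℤ) ^ T.des)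
      = (∑ i ∈ Finset.range k, (Polynomial.X : Polynomial ℤ) ^ i) *
        ∏ i : Fin k,
          ∑ᶠ T ∈ {T : RTree (V i) | IsBTree (V i) (hatB G (V i)) T},
            (Polynomial.X : Polynomial ℤ) ^ T.des := by
  rcases Nat.eq_zero_or_pos k with hk0 | hk
  · subst hk0
    have hIcc : Finset.Icc 1 n = ∅ := by rw [← hcover]; simp
    have hempty : IsEmpty (RTree (Finset.Icc 1 n)) := ⟨fun T =>
      Finset.eq_empty_iff_forall_notMem.1 hIcc T.root T.root_mem⟩
    rw [finsum_mem_setOf_eq]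
    rw [Finset.eq_empty_of_isEmpty ((Set.toFinite _).toFinset)]
    simp
  · have H : GSetup n k G V := ⟨hGS, hdisj, hcover, hne, hconn, hsep, hk⟩
    have hrhs : ∀ i : Fin k,
        (∑ᶠ T ∈ {T : RTree (V i) | IsBTree (V i) (hatB G (V i)) T},
          (Polynomial.X : Polynomial ℤ) ^ T.des)
        = ∑ T ∈ (Set.toFinite {T : RTree (V i) |
            IsBTree (V i) (hatB G (V i)) T}).toFinset,
            (Polynomial.X : Polynomial ℤ) ^ T.des := fun i =>
      finsum_mem_setOf_eq _ _
    have hmain : ∀ g ∈ Fintype.piFinset (fun i : Fin k =>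
        (Set.toFinite {T : RTree (V i) | IsBTree (V i) (hatB G (V i)) T}).toFinset),
        (∑ c : Fin k, (Polynomial.X : Polynomial ℤ) ^ (H.glue c g).des)
        = (∑ m ∈ Finset.range k, (Polynomial.X : Polynomial ℤ) ^ m) *
            ∏ i : Fin k, (Polynomial.X : Polynomial ℤ) ^ ((g i).des) := by
      intro g _
      have hr : Function.Injective (fun j : Fin k => (g j).root) := by
        intro a b hab
        have hab' : (g a).root = (g b).root := hab
        exact H.comp_unique (g a).root_mem
          (show (g a).root ∈ V b from hab' ▸ (g b).root_mem)
      calc ∑ c : Fin k, (Polynomial.X : Polynomial ℤ) ^ (H.glue c g).des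
          = ∑ c : Fin k, (Polynomial.X : Polynomial ℤ) ^
              ((Finset.univ.filter (fun j => (g c).root < (g j).root)).card) *
              (Polynomial.X : Polynomial ℤ) ^ (∑ i : Fin k, (g i).des) := by
            refine Finset.sum_congr rfl fun c _ => ?_
            rw [H.glue_des c g, pow_add, mul_comm]
        _ = (∑ c : Fin k, (Polynomial.X : Polynomial ℤ) ^
              ((Finset.univ.filter (fun j => (g c).root < (g j).root)).card)) *
              (Polynomial.X : Polynomial ℤ) ^ (∑ i : Fin k, (g i).des) := by
            rw [← Finset.sum_mul]
        _ = (∑ m ∈ Finset.range k, (Polynomial.X : Polynomial ℤ) ^ m) *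
              (Polynomial.X : Polynomial ℤ) ^ (∑ i : Fin k, (g i).des) := by
            rw [rank_sum _ hr]
        _ = (∑ m ∈ Finset.range k, (Polynomial.X : Polynomial ℤ) ^ m) *
              ∏ i : Fin k, (Polynomial.X : Polynomial ℤ) ^ ((g i).des) := by
            rw [← Finset.prod_pow_eq_pow_sum]
    calc (∑ᶠ T ∈ {T : RTree (Finset.Icc 1 n) |
          IsBTree (Finset.Icc 1 n) (hatB G (Finset.Icc 1 n)) T},
          (Polynomial.X : Polynomial ℤ) ^ T.des)
        = ∑ T ∈ (Set.toFinite {T : RTree (Finset.Icc 1 n) |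
            IsBTree (Finset.Icc 1 n) (hatB G (Finset.Icc 1 n)) T}).toFinset,
            (Polynomial.X : Polynomial ℤ) ^ T.des := finsum_mem_setOf_eq _ _
      _ = ∑ p ∈ Finset.univ ×ˢ Fintype.piFinset (fun i : Fin k =>
            (Set.toFinite {T : RTree (V i) |
              IsBTree (V i) (hatB G (V i)) T}).toFinset),
            (Polynomial.X : Polynomial ℤ) ^ (H.glue p.1 p.2).des := by
          refine Finset.sum_bij'
            (fun T hT => ((cIdx V H.hk T.root, fun i => H.splitTree T
              (by rw [Set.Finite.mem_toFinset] at hT; exact hT) i) :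
              Fin k × (∀ i, RTree (V i))))
            (fun p hp => H.glue p.1 p.2) ?_ ?_ ?_ ?_ ?_
          · intro T hT
            rw [Finset.mem_product]
            refine ⟨Finset.mem_univ _, Fintype.mem_piFinset.2 fun i => ?_⟩
            rw [Set.Finite.mem_toFinset]
            exact H.splitTree_isBTree T _ i
          · intro p hp
            rw [Finset.mem_product] at hp
            rw [Set.Finite.mem_toFinset]
            exact H.glue_isBTree p.1 p.2 (fun i => by
              have := Fintype.mem_piFinset.1 hp.2 i
              rw [Set.Finite.mem_toFinset] at this
              exact this)
          · intro T hT
            exact H.glue_split _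
          · intro p hp
            obtain ⟨c0, g0⟩ := p
            simp only [Prod.mk.injEq]
            constructor
            · exact cIdx_eq H.hdisj H.hk (g0 c0).root_mem
            · funext i
              exact H.splitTree_glue c0 g0 _ i
          · intro T hT
            rw [H.glue_split _]
      _ = ∑ c : Fin k, ∑ g ∈ Fintype.piFinset (fun i : Fin k =>
            (Set.toFinite {T : RTree (V i) |
              IsBTree (V i) (hatB G (V i)) T}).toFinset),
            (Polynomial.X : Polynomial ℤ) ^ (H.glue c g).des := by
          rw [Finset.sum_product]
      _ = ∑ g ∈ Fintype.piFinset (fun i : Fin k =>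
            (Set.toFinite {T : RTree (V i) |
              IsBTree (V i) (hatB G (V i)) T}).toFinset),
            ∑ c : Fin k, (Polynomial.X : Polynomial ℤ) ^ (H.glue c g).des :=
          Finset.sum_comm
      _ = ∑ g ∈ Fintype.piFinset (fun i : Fin k =>
            (Set.toFinite {T : RTree (V i) |
              IsBTree (V i) (hatB G (V i)) T}).toFinset),
            (∑ m ∈ Finset.range k, (Polynomial.X : Polynomial ℤ) ^ m) *
              ∏ i : Fin k, (Polynomial.X : Polynomial ℤ) ^ ((g i).des) :=
          Finset.sum_congr rfl hmain
      _ = (∑ m ∈ Finset.range k, (Polynomial.X : Polynomial ℤ) ^ m) *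
            ∑ g ∈ Fintype.piFinset (fun i : Fin k =>
              (Set.toFinite {T : RTree (V i) |
                IsBTree (V i) (hatB G (V i)) T}).toFinset),
              ∏ i : Fin k, (Polynomial.X : Polynomial ℤ) ^ ((g i).des) := by
          rw [Finset.mul_sum]
      _ = (∑ m ∈ Finset.range k, (Polynomial.X : Polynomial ℤ) ^ m) *
            ∏ i : Fin k, ∑ T ∈ (Set.toFinite {T : RTree (V i) |
              IsBTree (V i) (hatB G (V i)) T}).toFinset,
              (Polynomial.X : Polynomial ℤ) ^ T.des := by
          rw [Finset.prod_univ_sum]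
      _ = (∑ i ∈ Finset.range k, (Polynomial.X : Polynomial ℤ) ^ i) *
            ∏ i : Fin k,
              ∑ᶠ T ∈ {T : RTree (V i) | IsBTree (V i) (hatB G (V i)) T},
                (Polynomial.X : Polynomial ℤ) ^ T.des := by
          rw [Finset.prod_congr rfl (fun i _ => (hrhs i).symm)]
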